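/- arXiv:1608.03742 — 4 statements merged into one kernel-verified Lean document; each statement's English description precedes it below -/
import Mathlib

section
/- The function f : [1, ∞) → [0, 1) defined by f(λ) = (λ⁴ - 4·ln(λ)·λ² - 1)/(λ⁴ - 2λ² + 1) for λ > 1 and f(1) = 0 is strictly monotone increasing on [1, ∞). -/
open Real Set

private lemma contlog : ContinuousOn Real.log (Set.Ici (1:ℝ)) := by
  apply Real.continuousOn_log.mono
  intro x hx
  simp only [Set.mem_Ici] at hx
  simp only [Set.mem_compl_iff, Set.mem_singleton_iff]
  intro h; rw [h] at hx; linarith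

private lemma mono_aux (g g' : ℝ → ℝ)
    (hc : ContinuousOn g (Set.Ici 1))
    (hd : ∀ x : ℝ, 1 < x → HasDerivAt g (g' x) x)
    (hp : ∀ x : ℝ, 1 < x → 0 < g' x)
    (h1 : g 1 = 0) : ∀ l : ℝ, 1 < l → 0 < g l := by
  intro l hl
  have hm : StrictMonoOn g (Set.Ici 1) := by
    apply strictMonoOn_of_deriv_pos (convex_Ici 1) hc
    intro x hx
    rw [interior_Ici] at hx
    rw [(hd x hx).deriv]
    exact hp x hx
  have := hm (Set.self_mem_Ici) (Set.mem_Ici.mpr hl.le) hl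
  rwa [h1] at this

private lemma aux1 : ∀ l : ℝ, 1 < l → 0 < l ^ 2 - 2 * Real.log l - 1 := by
  apply mono_aux _ (fun x => 2 * x - 2 * x⁻¹)
  · apply ContinuousOn.sub (ContinuousOn.sub (by fun_prop) (continuousOn_const.mul contlog)) continuousOn_const
  · intro x hx
    have hx0 : (0:ℝ) < x := by linarith
    have h1 : HasDerivAt (fun y : ℝ => y ^ 2) (2 * x) x := by
      simpa using hasDerivAt_pow 2 x
    have h2 : HasDerivAt (fun y : ℝ => 2 * Real.log y) (2 * x⁻¹) x :=
      (Real.hasDerivAt_log hx0.ne').const_mul 2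
    simpa using (h1.sub h2).sub_const 1
  · intro x hx
    have hx0 : (0:ℝ) < x := by linarith
    have h : x⁻¹ * x = 1 := inv_mul_cancel₀ hx0.ne'
    nlinarith [sq_nonneg (x - 1)]
  · simp

private lemma auxA : ∀ l : ℝ, 1 < l → 0 < l ^ 4 - 4 * Real.log l * l ^ 2 - 1 := by
  apply mono_aux _ (fun x => 4 * x ^ 3 - (4 * x⁻¹ * x ^ 2 + 4 * Real.log x * (2 * x)))
  · apply ContinuousOn.sub (ContinuousOn.sub (by fun_prop) ?_) continuousOn_const
    exact (continuousOn_const.mul contlog).mul (by fun_prop)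
  · intro x hx
    have hx0 : (0:ℝ) < x := by linarith
    have h1 : HasDerivAt (fun y : ℝ => y ^ 4) (4 * x ^ 3) x := by
      simpa using hasDerivAt_pow 4 x
    have h2 : HasDerivAt (fun y : ℝ => 4 * Real.log y) (4 * x⁻¹) x :=
      (Real.hasDerivAt_log hx0.ne').const_mul 4
    have h3 : HasDerivAt (fun y : ℝ => y ^ 2) (2 * x) x := by
      simpa using hasDerivAt_pow 2 x
    have h4 := h2.mul h3
    have := (h1.sub h4).sub_const 1
    exact this
  · intro x hx
    have hx0 : (0:ℝ) < x := by linarith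
    have h : x⁻¹ * x = 1 := inv_mul_cancel₀ hx0.ne'
    have h5 := aux1 x hx
    nlinarith
  · simp

private lemma aux0 : ∀ l : ℝ, 1 < l → 0 < 2 * l ^ 2 * Real.log l - l ^ 2 + 1 := by
  apply mono_aux _ (fun x => (2 * (2 * x) * Real.log x + 2 * x ^ 2 * x⁻¹) - 2 * x)
  · apply ContinuousOn.add (ContinuousOn.sub ((ContinuousOn.mul (by fun_prop) contlog)) (by fun_prop)) continuousOn_const
  · intro x hx
    have hx0 : (0:ℝ) < x := by linarith
    have h1 : HasDerivAt (fun y : ℝ => 2 * y ^ 2) (2 * (2 * x)) x := by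
      simpa using (hasDerivAt_pow 2 x).const_mul 2
    have h3 : HasDerivAt (fun y : ℝ => y ^ 2) (2 * x) x := by
      simpa using hasDerivAt_pow 2 x
    have h2 := (h1.mul (Real.hasDerivAt_log hx0.ne')).sub h3
    have := h2.add_const 1
    exact this
  · intro x hx
    have hx0 : (0:ℝ) < x := by linarith
    have h2 : x ^ 2 * x⁻¹ = x := by field_simp
    have hlog : 0 < Real.log x := Real.log_pos hx
    nlinarith [mul_pos hx0 hlog]
  · simp

private lemma auxB : ∀ l : ℝ, 1 < l → 0 < (l ^ 2 + 1) * Real.log l - (l ^ 2 - 1) := by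
  apply mono_aux _ (fun x => (2 * x * Real.log x + (x ^ 2 + 1) * x⁻¹) - 2 * x)
  · apply ContinuousOn.sub ((ContinuousOn.mul (by fun_prop) contlog)) (by fun_prop)
  · intro x hx
    have hx0 : (0:ℝ) < x := by linarith
    have h1 : HasDerivAt (fun y : ℝ => y ^ 2 + 1) (2 * x) x := by
      simpa using (hasDerivAt_pow 2 x).add_const 1
    have h2 := h1.mul (Real.hasDerivAt_log hx0.ne')
    have h3 : HasDerivAt (fun y : ℝ => y ^ 2 - 1) (2 * x) x := by
      simpa using (hasDerivAt_pow 2 x).sub_const 1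
    have := h2.sub h3
    exact this
  · intro x hx
    have hx0 : (0:ℝ) < x := by linarith
    have h : x⁻¹ * x = 1 := inv_mul_cancel₀ hx0.ne'
    have hE : 2 * x * Real.log x + (x ^ 2 + 1) * x⁻¹ - 2 * x
        = (2 * x ^ 2 * Real.log x - x ^ 2 + 1) * x⁻¹ := by
      field_simp; ring
    rw [hE]
    exact mul_pos (aux0 x hx) (inv_pos.mpr hx0)
  · simp

private lemma denom_pos : ∀ l : ℝ, 1 < l → 0 < l ^ 4 - 2 * l ^ 2 + 1 := by
  intro l hl
  have h : 0 < l ^ 2 - 1 := by nlinarith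
  nlinarith [mul_pos h h]

private lemma hasDerivG (l : ℝ) (hl : 1 < l) :
    HasDerivAt (fun x => (x ^ 4 - 4 * Real.log x * x ^ 2 - 1) / (x ^ 4 - 2 * x ^ 2 + 1))
      (((4 * l ^ 3 - (4 * l⁻¹ * l ^ 2 + 4 * Real.log l * (2 * l))) * (l ^ 4 - 2 * l ^ 2 + 1)
        - (l ^ 4 - 4 * Real.log l * l ^ 2 - 1) * (4 * l ^ 3 - 2 * (2 * l)))
        / (l ^ 4 - 2 * l ^ 2 + 1) ^ 2) l := by
  have hx0 : (0:ℝ) < l := by linarith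
  have h1 : HasDerivAt (fun y : ℝ => y ^ 4) (4 * l ^ 3) l := by
    simpa using hasDerivAt_pow 4 l
  have h2 : HasDerivAt (fun y : ℝ => 4 * Real.log y) (4 * l⁻¹) l :=
    (Real.hasDerivAt_log hx0.ne').const_mul 4
  have h3 : HasDerivAt (fun y : ℝ => y ^ 2) (2 * l) l := by
    simpa using hasDerivAt_pow 2 l
  have hN : HasDerivAt (fun y : ℝ => y ^ 4 - 4 * Real.log y * y ^ 2 - 1)
      (4 * l ^ 3 - (4 * l⁻¹ * l ^ 2 + 4 * Real.log l * (2 * l))) l := by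
    have := (h1.sub (h2.mul h3)).sub_const 1
    exact this
  have hD : HasDerivAt (fun y : ℝ => y ^ 4 - 2 * y ^ 2 + 1)
      (4 * l ^ 3 - 2 * (2 * l)) l := by
    have := (h1.sub (h3.const_mul 2)).add_const 1
    exact this
  exact hN.div hD (denom_pos l hl).ne'

/-- The function `f : [1,∞) → [0,1)` defined by
`f(λ) = (λ⁴ - 4 ln(λ) λ² - 1)/(λ⁴ - 2λ² + 1)` for `λ > 1` and `f(1) = 0`
is strictly monotone increasing on `[1,∞)`. -/
theorem stmt_0 (f : ℝ → ℝ)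
    (hf : ∀ l : ℝ, 1 < l →
      f l = (l ^ 4 - 4 * Real.log l * l ^ 2 - 1) / (l ^ 4 - 2 * l ^ 2 + 1))
    (hf1 : f 1 = 0) :
    StrictMonoOn f (Set.Ici 1) := by
  set g : ℝ → ℝ := fun x => (x ^ 4 - 4 * Real.log x * x ^ 2 - 1) / (x ^ 4 - 2 * x ^ 2 + 1) with hg
  have hgmono : StrictMonoOn g (Set.Ioi 1) := by
    apply strictMonoOn_of_deriv_pos (convex_Ioi 1)
    · intro x hx
      exact ((hasDerivG x (Set.mem_Ioi.mp hx)).continuousAt).continuousWithinAt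
    · intro x hx
      rw [interior_Ioi] at hx
      have hx1 : (1:ℝ) < x := Set.mem_Ioi.mp hx
      rw [(hasDerivG x hx1).deriv]
      have hx0 : (0:ℝ) < x := by linarith
      have h : x⁻¹ * x = 1 := inv_mul_cancel₀ hx0.ne'
      have key : (4 * x ^ 3 - (4 * x⁻¹ * x ^ 2 + 4 * Real.log x * (2 * x))) * (x ^ 4 - 2 * x ^ 2 + 1)
          - (x ^ 4 - 4 * Real.log x * x ^ 2 - 1) * (4 * x ^ 3 - 2 * (2 * x))
          = 8 * x * (x ^ 2 - 1) * ((x ^ 2 + 1) * Real.log x - (x ^ 2 - 1)) := by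
        field_simp
        ring
      rw [key]
      have hB := auxB x hx1
      have hD := denom_pos x hx1
      have : 0 < 8 * x * (x ^ 2 - 1) := by nlinarith
      positivity
  intro x hx y hy hxy
  simp only [Set.mem_Ici] at hx hy
  have hy1 : 1 < y := lt_of_le_of_lt hx hxy
  rcases eq_or_lt_of_le hx with h1 | h1
  · rw [← h1, hf1, hf y hy1]
    exact div_pos (auxA y hy1) (denom_pos y hy1)
  · rw [hf x h1, hf y hy1]
    exact hgmono (Set.mem_Ioi.mpr h1) (Set.mem_Ioi.mpr hy1) hxy
end

section
/- Let Φₜ be the one-parameter family of Möbius transformations of the closed unit ball in ℝ³ given in spherical-type coordinates by Φₜ(r·p) = (t·(2rt·p¹ + r² + 1)·e₁ + (1 - t²)·r·p)/(r²t² + 2rt·p¹ + 1) for r ∈ [0,1], t ∈ (-1,1), p ∈ S². Then the derivative at t = 0 of the i-th coordinate of the normalized point Φₜ(rp)/|Φₜ(rp)| equals ((1 + r²)/r)·(δ¹ⁱ - p¹·pⁱ) for every p ∈ S² and r ∈ (0,1). -/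
/-- The Möbius transformation `Φₜ` of the closed unit ball of `ℝ³`, given in
spherical-type coordinates by
`Φₜ(r·p) = (t(2rt·p¹ + r² + 1)e₁ + (1-t²)r·p)/(r²t² + 2rt·p¹ + 1)`. -/
noncomputable def mobiusBall (r : ℝ) (p : EuclideanSpace ℝ (Fin 3)) (t : ℝ) :
    EuclideanSpace ℝ (Fin 3) :=
  (r ^ 2 * t ^ 2 + 2 * r * t * p 0 + 1)⁻¹ •
    ((t * (2 * r * t * p 0 + r ^ 2 + 1)) • EuclideanSpace.single (0 : Fin 3) (1 : ℝ)
      + ((1 - t ^ 2) * r) • p)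

/-- the derivative at `t = 0` of the `i`-th coordinate of the normalized
point `Φₜ(rp)/|Φₜ(rp)|` equals `((1 + r²)/r)(δ¹ⁱ - p¹ pⁱ)` for every `p ∈ S²` and
`r ∈ (0,1)`. -/
theorem stmt_7 (r : ℝ) (hr0 : 0 < r) (hr1 : r < 1)
    (p : EuclideanSpace ℝ (Fin 3)) (hp : ‖p‖ = 1) (i : Fin 3) :
    HasDerivAt (fun t : ℝ => mobiusBall r p t i / ‖mobiusBall r p t‖)
      (((1 + r ^ 2) / r) * ((if i = 0 then (1:ℝ) else 0) - p 0 * p i)) 0 := by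
  set δ : ℝ := if i = 0 then (1:ℝ) else 0 with hδ
  set a : ℝ → ℝ := fun t => t * (2 * r * t * p 0 + r ^ 2 + 1) with ha_def
  set b : ℝ → ℝ := fun t => (1 - t ^ 2) * r with hb_def
  set Q : ℝ → ℝ := fun t => a t ^ 2 + 2 * (a t * b t) * p 0 + b t ^ 2 with hQ_def
  have ha0 : a 0 = 0 := by simp [ha_def]
  have hb0 : b 0 = r := by simp [hb_def]
  have hQ0 : Q 0 = r ^ 2 := by simp [hQ_def, ha0, hb0]
  have ha : HasDerivAt a (r ^ 2 + 1) 0 := by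
    have h : HasDerivAt (fun t : ℝ => 2 * r * p 0 * t ^ 2 + (r ^ 2 + 1) * t)
        (r ^ 2 + 1) 0 := by
      simpa [Pi.add_def] using ((hasDerivAt_pow 2 (0:ℝ)).const_mul (2 * r * p 0)).add
        ((hasDerivAt_id (0:ℝ)).const_mul (r ^ 2 + 1))
    exact h.congr_of_eventuallyEq (by filter_upwards with t; simp [ha_def]; ring)
  have hb : HasDerivAt b 0 0 := by
    have h : HasDerivAt (fun t : ℝ => (1 - t ^ 2) * r) ((0 - 2 * 0 ^ 1) * r) 0 :=
      ((hasDerivAt_const (0:ℝ) (1:ℝ)).sub (hasDerivAt_pow 2 (0:ℝ))).mul_const r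
    simpa using h
  have hN : HasDerivAt (fun t => a t * δ + b t * p i) ((r ^ 2 + 1) * δ) 0 := by
    simpa [Pi.add_def] using (ha.mul_const δ).add (hb.mul_const (p i))
  have hQ : HasDerivAt Q (2 * (r ^ 2 + 1) * r * p 0) 0 := by
    have h := ((ha.pow 2).add (((ha.mul hb).const_mul 2).mul_const (p 0))).add (hb.pow 2)
    refine h.congr_deriv ?_
    rw [ha0, hb0]; push_cast; ring
  have hQ0ne : Q 0 ≠ 0 := by rw [hQ0]; positivity
  have hsq := hQ.sqrt hQ0ne
  have hsq0 : Real.sqrt (Q 0) = r := by rw [hQ0, Real.sqrt_sq hr0.le]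
  have hrne : r ≠ 0 := hr0.ne'
  have hdiv := hN.div hsq (by rw [hsq0]; exact hrne)
  have hval : ((r ^ 2 + 1) * δ * Real.sqrt (Q 0) -
      (a 0 * δ + b 0 * p i) * (2 * (r ^ 2 + 1) * r * p 0 / (2 * Real.sqrt (Q 0)))) /
      Real.sqrt (Q 0) ^ 2
      = ((1 + r ^ 2) / r) * (δ - p 0 * p i) := by
    rw [hsq0, ha0, hb0]
    field_simp
    ring
  rw [hval] at hdiv
  -- now transfer to the original function via eventual equality
  set D : ℝ → ℝ := fun t => r ^ 2 * t ^ 2 + 2 * r * t * p 0 + 1 with hD_def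
  have hDc : Continuous D := by fun_prop
  have hDpos : ∀ᶠ t in nhds (0:ℝ), 0 < D t := by
    have h0 : (0:ℝ) < D 0 := by simp [hD_def]
    exact continuousAt_const.eventually_lt (hDc.continuousAt (x := 0)) h0
  refine hdiv.congr_of_eventuallyEq ?_
  filter_upwards [hDpos] with t ht
  have hnorm : ‖mobiusBall r p t‖ = (D t)⁻¹ * Real.sqrt (Q t) := by
    have hv : ‖(a t) • EuclideanSpace.single (0 : Fin 3) (1 : ℝ) + (b t) • p‖
        = Real.sqrt (Q t) := by
      rw [← Real.sqrt_sq (norm_nonneg _)]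
      congr 1
      rw [norm_add_sq_real, norm_smul, norm_smul, real_inner_smul_left,
        real_inner_smul_right, EuclideanSpace.inner_single_left,
        EuclideanSpace.norm_single, hp]
      simp [hQ_def, mul_pow]
      ring
    rw [mobiusBall, norm_smul,
      show (t * (2 * r * t * p 0 + r ^ 2 + 1)) = a t from rfl,
      show ((1 - t ^ 2) * r) = b t from rfl, hv, Real.norm_eq_abs,
      abs_of_pos (show (0:ℝ) < (r ^ 2 * t ^ 2 + 2 * r * t * p 0 + 1)⁻¹ from inv_pos.mpr ht)]
  have hcoord : mobiusBall r p t i = (D t)⁻¹ * (a t * δ + b t * p i) := by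
    rw [mobiusBall]
    simp [EuclideanSpace.single_apply, hδ, ha_def, hb_def, hD_def, mul_add, mul_ite]
  rw [hcoord, hnorm, mul_comm ((D t)⁻¹), mul_comm ((D t)⁻¹)]
  rw [mul_div_mul_right _ _ (by positivity : (D t)⁻¹ ≠ 0)]
  rfl
end

section
/- Let K : ℝ → ℝ be defined by K(λ) = |(1 + 4·ln(λ)·λ² - λ⁴)/(λ⁴ - 2λ² + 1)| for λ > 1 (with K(1) := 0 by continuity). Then K is a bijection from [1, ∞) onto [0, 1), and in particular for every c ∈ [0, 1) there exists a unique λ ≥ 1 with K(λ) = c. -/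
open Real Set

private lemma aux_log_lt {l : ℝ} (hl : 1 < l) : Real.log l < l - 1 :=
  Real.log_lt_sub_one_of_pos (by linarith) (by linarith)

private lemma aux_lt_log {l : ℝ} (hl : 1 < l) : l - 1 < l * Real.log l := by
  have h0 : (0:ℝ) < l := by linarith
  have h1 : Real.log l⁻¹ < l⁻¹ - 1 :=
    Real.log_lt_sub_one_of_pos (by positivity) (by
      intro h
      rw [inv_eq_one] at h
      linarith)
  rw [Real.log_inv] at h1
  have h2 : l * (-Real.log l) < l * (l⁻¹ - 1) := by
    exact mul_lt_mul_of_pos_left h1 h0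
  have h3 : l * (l⁻¹ - 1) = 1 - l := by field_simp
  nlinarith

private lemma aux_contlog : ContinuousOn Real.log (Ici (1:ℝ)) :=
  Real.continuousOn_log.mono (by
    intro x hx
    simp only [mem_compl_iff, mem_singleton_iff]
    intro h
    rw [h] at hx
    exact absurd (mem_Ici.mp hx) (by norm_num))

private lemma aux_pos_of_deriv (f f' : ℝ → ℝ) (hc : ContinuousOn f (Ici 1))
    (hd : ∀ x, 1 < x → HasDerivAt f (f' x) x)
    (hp : ∀ x, 1 < x → 0 < f' x) (h1 : f 1 = 0) :
    ∀ l, 1 < l → 0 < f l := by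
  have hm : StrictMonoOn f (Ici 1) := by
    apply strictMonoOn_of_deriv_pos (convex_Ici 1) hc
    intro x hx
    rw [interior_Ici] at hx
    rw [(hd x hx).deriv]
    exact hp x hx
  intro l hl
  have := hm self_mem_Ici (mem_Ici.mpr hl.le) hl
  rwa [h1] at this

private lemma aux_A {l : ℝ} (hl : 1 < l) : 2*l*Real.log l < l^2 - 1 := by
  have h := aux_pos_of_deriv (fun x => x^2 - 1 - 2*x*Real.log x)
    (fun x => 2*x - (2*Real.log x + 2)) ?_ ?_ ?_ (by norm_num)
  · have := h l hl; linarith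
  · exact ((continuous_pow 2).continuousOn.sub continuousOn_const).sub
      (((continuous_const.mul continuous_id).continuousOn).mul aux_contlog)
  · intro x hx
    have hx0 : x ≠ 0 := by positivity
    have h1 : HasDerivAt (fun y:ℝ => y^2) (2*x) x := by simpa using hasDerivAt_pow 2 x
    have h2 : HasDerivAt (fun y:ℝ => 2*y*Real.log y) (2*Real.log x + 2) x := by
      have := ((hasDerivAt_id x).const_mul (2:ℝ)).mul (Real.hasDerivAt_log hx0)
      refine this.congr_deriv ?_
      field_simp
      simp only [id_eq]
      ring
    exact (h1.sub_const 1).sub h2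
  · intro x hx
    have := aux_log_lt hx
    nlinarith

private lemma aux_B {l : ℝ} (hl : 1 < l) : l^2 - 1 < (l^2+1)*Real.log l := by
  have h := aux_pos_of_deriv (fun x => (x^2+1)*Real.log x - x^2 + 1)
    (fun x => (2*x*Real.log x + (x^2+1)*x⁻¹) - 2*x) ?_ ?_ ?_ (by norm_num)
  · have := h l hl; linarith
  · exact ((((continuous_pow 2).continuousOn.add continuousOn_const).mul aux_contlog).sub
      (continuous_pow 2).continuousOn).add continuousOn_const
  · intro x hx
    have hx0 : x ≠ 0 := by positivity
    have h1 : HasDerivAt (fun y:ℝ => (y^2+1)*Real.log y) (2*x*Real.log x + (x^2+1)*x⁻¹) x := by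
      have := ((hasDerivAt_pow 2 x).add_const 1).mul (Real.hasDerivAt_log hx0)
      refine this.congr_deriv ?_
      ring
    have h2 : HasDerivAt (fun y:ℝ => y^2) (2*x) x := by simpa using hasDerivAt_pow 2 x
    exact (h1.sub h2).add_const 1
  · intro x hx
    have hx0 : (0:ℝ) < x := by linarith
    have h1 := aux_lt_log hx
    have key : (2*x*Real.log x + (x^2+1)*x⁻¹) - 2*x = (2*x*(x*Real.log x) - x^2 + 1)/x := by
      field_simp
      ring
    rw [key]
    apply div_pos _ hx0
    nlinarith

noncomputable def auxG : ℝ → ℝ := fun l => (l^4 - 4*Real.log l*l^2 - 1)/((l^2-1)^2)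

private lemma auxG_one : auxG 1 = 0 := by
  simp [auxG]

private lemma aux_Dpos {l : ℝ} (hl : 1 < l) : 0 < ((l:ℝ)^2-1)^2 := by
  have : (0:ℝ) < l^2 - 1 := by nlinarith
  positivity

private lemma aux_Npos {l : ℝ} (hl : 1 < l) : 0 < l^4 - 4*Real.log l*l^2 - 1 := by
  have h := aux_A hl
  have h2 : 0 < 2*l*(l^2 - 1 - 2*l*Real.log l) := by
    apply mul_pos (by linarith)
    linarith
  nlinarith [sq_nonneg (l-1), sq_nonneg (l+1), mul_pos (mul_pos (show (0:ℝ) < l-1 by linarith) (show (0:ℝ) < l-1 by linarith)) (show (0:ℝ) < l-1 by linarith)]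

private lemma aux_NltD {l : ℝ} (hl : 1 < l) :
    l^4 - 4*Real.log l*l^2 - 1 < (l^2-1)^2 := by
  have h := aux_lt_log hl
  nlinarith [sq_nonneg (l-1)]

private lemma aux_Gpos {l : ℝ} (hl : 1 < l) : 0 < auxG l :=
  div_pos (aux_Npos hl) (aux_Dpos hl)

private lemma aux_Glt1 {l : ℝ} (hl : 1 < l) : auxG l < 1 :=
  (div_lt_one (aux_Dpos hl)).mpr (aux_NltD hl)


private lemma aux_contG : ContinuousOn auxG (Ioi (1:ℝ)) := by
  have clog : ContinuousOn Real.log (Ioi (1:ℝ)) :=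
    aux_contlog.mono (by intro x hx; exact le_of_lt (mem_Ioi.mp hx))
  apply ContinuousOn.div
  · exact ((continuous_pow 4).continuousOn.sub
      ((continuousOn_const.mul clog).mul (continuous_pow 2).continuousOn)).sub
      continuousOn_const
  · exact (((continuous_pow 2).sub continuous_const).pow 2).continuousOn
  · intro x hx
    exact ne_of_gt (aux_Dpos (mem_Ioi.mp hx))

private lemma aux_Gderiv {l : ℝ} (hl : 1 < l) :
    HasDerivAt auxG
      (((4*l^3 - 4*l - 8*l*Real.log l) * (l^2-1)^2 -
        (l^4 - 4*Real.log l*l^2 - 1) * (2*(l^2-1)*(2*l))) / ((l^2-1)^2)^2) l := by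
  have hx0 : l ≠ 0 := by positivity
  have h1 : HasDerivAt (fun x:ℝ => x^4) (4*l^3) l := by simpa using hasDerivAt_pow 4 l
  have h2 : HasDerivAt (fun x:ℝ => 4*Real.log x*x^2)
      ((4*l⁻¹)*l^2 + (4*Real.log l)*(2*l)) l := by
    have := ((Real.hasDerivAt_log hx0).const_mul (4:ℝ)).mul (hasDerivAt_pow 2 l)
    exact this.congr_deriv (by simp)
  have hN : HasDerivAt (fun x:ℝ => x^4 - 4*Real.log x*x^2 - 1)
      (4*l^3 - 4*l - 8*l*Real.log l) l := by
    have := (h1.sub h2).sub_const 1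
    refine this.congr_deriv ?_
    field_simp
    ring
  have hD : HasDerivAt (fun x:ℝ => (x^2-1)^2) (2*(l^2-1)*(2*l)) l := by
    have := ((hasDerivAt_pow 2 l).sub_const 1).pow 2
    exact this.congr_deriv (by simp)
  exact hN.div hD (ne_of_gt (aux_Dpos hl))

private lemma aux_Gmono : StrictMonoOn auxG (Ici 1) := by
  have hIoi : StrictMonoOn auxG (Ioi 1) := by
    apply strictMonoOn_of_deriv_pos (convex_Ioi 1) aux_contG
    intro x hx
    rw [interior_Ioi] at hx
    have hx1 : 1 < x := hx
    rw [(aux_Gderiv hx1).deriv]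
    apply div_pos _ (pow_pos (aux_Dpos hx1) 2)
    have key : (4*x^3 - 4*x - 8*x*Real.log x) * (x^2-1)^2 -
        (x^4 - 4*Real.log x*x^2 - 1) * (2*(x^2-1)*(2*x)) =
        (x^2-1) * (8*x) * ((x^2+1)*Real.log x - (x^2 - 1)) := by ring
    rw [key]
    apply mul_pos (mul_pos (by nlinarith) (by linarith))
    linarith [aux_B hx1]
  intro x hx y hy hxy
  rcases eq_or_lt_of_le (mem_Ici.mp hx) with h | h
  · rw [← h, auxG_one]
    exact aux_Gpos (by rw [← h] at hxy; exact hxy)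
  · exact hIoi h (lt_trans h hxy) hxy

private lemma aux_Blow {l : ℝ} (hl : 1 < l) : auxG l ≤ (l^2-1)/(l^2+1) := by
  have hB := aux_B hl
  rw [auxG, div_le_div_iff₀ (aux_Dpos hl) (by positivity)]
  nlinarith [mul_lt_mul_of_pos_left hB (show (0:ℝ) < 4*l^2 by positivity),
    sq_nonneg (l^2-1)]

private lemma aux_Bhigh {l : ℝ} (hl : 1 < l) :
    (l-6)*(l^2-1)^2 ≤ l * (l^4 - 4*Real.log l*l^2 - 1) := by
  have h := aux_log_lt hl
  nlinarith [mul_lt_mul_of_pos_left h (show (0:ℝ) < 4*l^3 by positivity),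
    mul_nonneg (sq_nonneg (l-1)) (show (0:ℝ) ≤ l^2+5*l+3 by positivity)]

private lemma aux_Gsurj {c : ℝ} (hc0 : 0 < c) (hc1 : c < 1) : ∃ l, 1 < l ∧ auxG l = c := by
  set a : ℝ := 1 + c/4 with ha
  set b : ℝ := 2 + 7/(1-c) with hb
  have ha1 : 1 < a := by rw [ha]; linarith
  have ha2 : a < 2 := by rw [ha]; linarith
  have hb2 : 2 < b := by
    rw [hb]
    have : 0 < 7/(1-c) := div_pos (by norm_num) (by linarith)
    linarith
  have hab : a ≤ b := by linarith
  have hb1 : 1 < b := by linarith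
  have hGa : auxG a < c := by
    refine lt_of_le_of_lt (aux_Blow ha1) ?_
    rw [div_lt_iff₀ (by positivity : (0:ℝ) < a^2+1), ha]
    nlinarith [mul_pos hc0 hc0, mul_pos (mul_pos hc0 hc0) hc0]
  have hGb : c ≤ auxG b := by
    have hD := aux_Dpos hb1
    have key := aux_Bhigh hb1
    have hcb : c * b < b - 6 := by
      have h1c : (1:ℝ) - c ≠ 0 := by linarith
      have h7 : 7/(1-c) * (1-c) = 7 := by field_simp
      rw [hb]
      nlinarith [h7]
    have h2 : c * ((b^2-1)^2) * b < b * (b^4 - 4*Real.log b*b^2 - 1) :=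
      calc c * ((b^2-1)^2) * b = (c*b) * (b^2-1)^2 := by ring
        _ < (b-6) * (b^2-1)^2 := mul_lt_mul_of_pos_right hcb hD
        _ ≤ b * (b^4 - 4*Real.log b*b^2 - 1) := key
    have h3 : c * ((b^2-1)^2) < b^4 - 4*Real.log b*b^2 - 1 := by
      have hb0 : (0:ℝ) < b := by linarith
      have h2' : (c*((b^2-1)^2))*b < (b^4 - 4*Real.log b*b^2 - 1)*b := by linarith
      exact (mul_lt_mul_iff_of_pos_right hb0).mp h2'
    rw [auxG, le_div_iff₀ hD]
    linarith
  have hsub : Icc a b ⊆ Ioi (1:ℝ) := fun x hx => lt_of_lt_of_le ha1 hx.1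
  obtain ⟨l, hlmem, hleq⟩ :=
    intermediate_value_Icc hab (aux_contG.mono hsub) ⟨hGa.le, hGb⟩
  exact ⟨l, lt_of_lt_of_le ha1 hlmem.1, hleq⟩

/-- Let `K(λ) = |(1 + 4 ln(λ) λ² - λ⁴)/(λ⁴ - 2λ² + 1)|` for `λ > 1`, with
`K(1) = 0`. Then `K` is a bijection from `[1,∞)` onto `[0,1)`, and in particular for
every `c ∈ [0,1)` there exists a unique `λ ≥ 1` with `K(λ) = c`. -/
theorem stmt_9 (K : ℝ → ℝ)
    (hK : ∀ l : ℝ, 1 < l →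
      K l = |(1 + 4 * Real.log l * l ^ 2 - l ^ 4) / (l ^ 4 - 2 * l ^ 2 + 1)|)
    (hK1 : K 1 = 0) :
    Set.BijOn K (Set.Ici 1) (Set.Ico 0 1) ∧
      ∀ c ∈ Set.Ico (0 : ℝ) 1, ∃! l : ℝ, 1 ≤ l ∧ K l = c := by
  have hEq : ∀ l ∈ Ici (1:ℝ), K l = auxG l := by
    intro l hl
    rcases eq_or_lt_of_le (mem_Ici.mp hl) with h | h
    · rw [← h, hK1, auxG_one]
    · rw [hK l h]
      have hD := aux_Dpos h
      have hN := aux_Npos h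
      have e1 : l^4 - 2*l^2 + 1 = (l^2-1)^2 := by ring
      have e2 : 1 + 4*Real.log l*l^2 - l^4 = -(l^4 - 4*Real.log l*l^2 - 1) := by ring
      rw [e1, e2, neg_div, abs_neg, abs_of_pos (div_pos hN hD)]
      rfl
  have hmaps : Set.MapsTo K (Set.Ici 1) (Set.Ico 0 1) := by
    intro l hl
    rw [mem_Ico, hEq l hl]
    rcases eq_or_lt_of_le (mem_Ici.mp hl) with h | h
    · rw [← h, auxG_one]; norm_num
    · exact ⟨(aux_Gpos h).le, aux_Glt1 h⟩
  have hinj : Set.InjOn K (Set.Ici 1) := by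
    intro x hx y hy hxy
    rw [hEq x hx, hEq y hy] at hxy
    exact aux_Gmono.injOn hx hy hxy
  have hsurj : Set.SurjOn K (Set.Ici 1) (Set.Ico 0 1) := by
    intro c hc
    rcases eq_or_lt_of_le hc.1 with h | h
    · exact ⟨1, self_mem_Ici, by rw [hK1, ← h]⟩
    · obtain ⟨l, hl, hGl⟩ := aux_Gsurj h hc.2
      exact ⟨l, mem_Ici.mpr hl.le, by rw [hEq l (mem_Ici.mpr hl.le), hGl]⟩
  refine ⟨⟨hmaps, hinj, hsurj⟩, ?_⟩
  intro c hc
  obtain ⟨l, hl, hKl⟩ := hsurj hc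
  refine ⟨l, ⟨mem_Ici.mp hl, hKl⟩, ?_⟩
  intro y hy
  exact hinj (mem_Ici.mpr hy.1) hl (hy.2.trans hKl.symm)
end

section
/- Consider the hyperbolic metric in polar coordinates and a graph surface M = {(h̃(p), p) : p ∈ S²} over the unit sphere with graph function h̃. Then the squared norm of the gradient of h̃ on the round sphere satisfies |∇^σ h̃|²_σ ≤ (F/(1-F))·sinh(h̃)², where F = |X|²_ḡ is the squared norm of the tangential projection of the radial direction onto M; in particular if F ≤ 1/2 then |∇^σ h̃|²_σ ≤ 2F·sinh(h̃)². -/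
open scoped RealInnerProductSpace

/-- Let `M = {(h̃(p), p) : p ∈ S²}` be a graph surface over the unit
sphere in hyperbolic polar coordinates `((0,∞) × S², dr² + sinh(r)²σ)`.  At a point
`p ∈ S²`, let `ν = (ν₀, νT)` be the hyperbolic unit normal of the graph (νT tangent to
the sphere, `ν₀² + sinh(h̃)²‖νT‖² = 1`, ν orthogonal to all graph tangent vectors
`(dh̃(w), w)`), and let `F = |X|²_ḡ = 1 - ḡ(∂_r, ν)² = 1 - ν₀²` be the squared norm of
the tangential projection of the radial direction.  Then the round gradient of `h̃`
satisfies `|∇^σ h̃|²_σ ≤ (F/(1-F)) sinh(h̃)²`, and if `F ≤ 1/2` then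
`|∇^σ h̃|²_σ ≤ 2F sinh(h̃)²`. -/
theorem stmt_19 (p : EuclideanSpace ℝ (Fin 3)) (hp : ‖p‖ = 1)
    (h : EuclideanSpace ℝ (Fin 3) → ℝ)
    (hdiff : DifferentiableAt ℝ h p) (hpos : 0 < h p)
    (ν₀ : ℝ) (νT : EuclideanSpace ℝ (Fin 3)) (hνT : ⟪νT, p⟫ = 0)
    (hνunit : ν₀ ^ 2 + Real.sinh (h p) ^ 2 * ‖νT‖ ^ 2 = 1)
    (hνorth : ∀ w : EuclideanSpace ℝ (Fin 3), ⟪w, p⟫ = 0 →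
      fderiv ℝ h p w * ν₀ + Real.sinh (h p) ^ 2 * ⟪w, νT⟫ = 0)
    (F : ℝ) (hF : F = 1 - ν₀ ^ 2) :
    ‖gradient h p - ⟪gradient h p, p⟫ • p‖ ^ 2 ≤ F / (1 - F) * Real.sinh (h p) ^ 2 ∧
      (F ≤ 1 / 2 →
        ‖gradient h p - ⟪gradient h p, p⟫ • p‖ ^ 2 ≤ 2 * F * Real.sinh (h p) ^ 2) := by
  obtain ⟨s, hs⟩ : ∃ s, s = Real.sinh (h p) := ⟨_, rfl⟩
  have hspos : 0 < s := hs ▸ Real.sinh_pos_iff.2 hpos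
  obtain ⟨g, hg⟩ : ∃ g, g = gradient h p := ⟨_, rfl⟩
  have hgrad : ∀ w : EuclideanSpace ℝ (Fin 3), fderiv ℝ h p w = ⟪g, w⟫ := by
    intro w
    rw [hg, gradient, InnerProductSpace.toDual_symm_apply]
  have hpp : ⟪p, p⟫ = 1 := by
    have := real_inner_self_eq_norm_sq p
    rw [hp] at this; simpa using this
  obtain ⟨gT, hgT⟩ : ∃ gT, gT = g - ⟪g, p⟫ • p := ⟨_, rfl⟩
  have hgTp : ⟪gT, p⟫ = 0 := by
    rw [hgT, inner_sub_left, real_inner_smul_left, hpp]; ring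
  rw [← hs, ← hg, ← hgT]
  -- ν₀ ≠ 0
  have hν₀ : ν₀ ≠ 0 := by
    intro h0
    have h2 := hνorth νT hνT
    rw [h0, mul_zero, zero_add, ← hs, real_inner_self_eq_norm_sq] at h2
    have : ‖νT‖ ^ 2 = 0 := by
      rcases mul_eq_zero.1 h2 with h' | h'
      · exact absurd h' (by positivity)
      · simpa [sq] using h'
    rw [h0, ← hs, this] at hνunit
    simp at hνunit
  -- key identities
  have h1 := hνorth gT hgTp
  have h2 := hνorth νT hνT
  rw [hgrad, ← hs] at h1 h2
  have hpνT : ⟪p, νT⟫ = 0 := by rw [real_inner_comm]; exact hνT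
  have hggT : ⟪g, gT⟫ = ‖gT‖ ^ 2 := by
    rw [hgT, ← real_inner_self_eq_norm_sq, inner_sub_left, inner_sub_right, inner_sub_right,
      real_inner_smul_left, real_inner_smul_right, real_inner_smul_right, real_inner_smul_left,
      real_inner_comm p g, hpp]
    ring
  have hgνT : ⟪g, νT⟫ = ⟪gT, νT⟫ := by
    rw [hgT, inner_sub_left, real_inner_smul_left, hpνT]; ring
  rw [hggT] at h1
  rw [hgνT, real_inner_self_eq_norm_sq] at h2
  have hnorm : ‖gT‖ ^ 2 * ν₀ ^ 2 = s ^ 4 * ‖νT‖ ^ 2 := by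
    have e1 : ‖gT‖ ^ 2 * ν₀ = -(s ^ 2 * ⟪gT, νT⟫) := by linarith
    have e2 : ⟪gT, νT⟫ * ν₀ = -(s ^ 2 * ‖νT‖ ^ 2) := by linarith
    have e3 : ‖gT‖ ^ 2 * ν₀ * ν₀ = -(s ^ 2) * (⟪gT, νT⟫ * ν₀) := by rw [e1]; ring
    rw [e2] at e3
    linear_combination e3
  have h1F : 1 - F = ν₀ ^ 2 := by rw [hF]; ring
  have hFval : F = s ^ 2 * ‖νT‖ ^ 2 := by rw [hF]; rw [← hs] at hνunit; linarith
  have hν₀sq : (0:ℝ) < ν₀ ^ 2 := by positivity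
  have heq : ‖gT‖ ^ 2 = F / (1 - F) * s ^ 2 := by
    rw [h1F, hFval]
    rw [div_mul_eq_mul_div, eq_div_iff (ne_of_gt hν₀sq)]
    nlinarith [hnorm]
  refine ⟨le_of_eq heq, fun hF2 => ?_⟩
  have hFnn : 0 ≤ F := by rw [hFval]; positivity
  have hdv : F / (1 - F) ≤ 2 * F := by
    rw [div_le_iff₀ (by linarith : (0:ℝ) < 1 - F)]
    nlinarith
  rw [heq]
  have hs2 : (0:ℝ) ≤ s ^ 2 := sq_nonneg s
  exact mul_le_mul_of_nonneg_right hdv hs2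
end
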